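/- For every real number t ≥ √15 and all integers m ≥ 1 and k ≥ 1, define B₀ := 2^{3+2k}·π^{2+2k}·m^{1+2k}·ζ(1+2k)/(1+2k)!, B₁ := 24π√(2π)·m^{3/2+k}·(1 + k/(√3·π))^k·e^{4πm/√3}, B₂ := 2^{4+2k}·π^{2+2k}·m^{1+2k}·ζ(1+2k)/(2k+1)! · (2k/(√3·π))^k · e^{−k/2} · e^{−√3·π/2}/(1 − e^{−√3·π/2}), B₃ := (m + k/(√3·π))^k · e^{tπ(m−1)}, and B₄ := (m + k/(√3·π))^k · e^{tπm/2}. Then (B₀ + B₁ + B₂ + B₃ + B₄) · e^{−tπ(m−1/2)} ≤ 615 · m^{1+2k} · (m + k/(√3·π))^k. -/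

import Mathlib

open Real
private lemma term_bd (k : ℕ) (hk : 1 ≤ k) (N : ℝ) (hN : 1 ≤ N) :
    1 / (N + 1) ^ (1 + 2 * k) ≤ (1/2 : ℝ) ^ (2 * k - 1) * (1 / N - 1 / (N + 1)) := by
  have hN0 : (0:ℝ) < N := by linarith
  have hN1 : (0:ℝ) < N + 1 := by linarith
  have h2 : (2:ℝ) ^ (2*k-1) * (N * (N+1)) ≤ (N+1) ^ (1+2*k) := by
    have e1 : (N+1) ^ (1+2*k) = (N+1) ^ (2*k-1) * (N+1) ^ 2 := by
      rw [← pow_add]; congr 1; omega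
    rw [e1]
    have h3 : (2:ℝ) ^ (2*k-1) ≤ (N+1) ^ (2*k-1) :=
      pow_le_pow_left₀ (by norm_num) (by linarith) _
    have h4 : N * (N+1) ≤ (N+1) ^ 2 := by nlinarith
    exact mul_le_mul h3 h4 (by positivity) (by positivity)
  have heq : (1/2 : ℝ) ^ (2*k-1) * (1 / N - 1 / (N+1)) =
      1 / ((2:ℝ) ^ (2*k-1) * (N * (N+1))) := by
    rw [one_div_pow]
    field_simp
    ring
  rw [heq]
  exact one_div_le_one_div_of_le (by positivity) h2

private lemma zeta_bd (k : ℕ) (hk : 1 ≤ k) :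
    (∑' n : ℕ, 1 / ((n : ℝ) + 1) ^ (1 + 2 * k)) ≤ 1 + (1/2 : ℝ) ^ (2 * k - 1) := by
  apply Real.tsum_le_of_sum_range_le (fun n => by positivity)
  intro n
  have key : ∀ n : ℕ, ∑ i ∈ Finset.range (n+1), 1 / ((i : ℝ) + 1) ^ (1 + 2 * k) ≤
      1 + (1/2 : ℝ) ^ (2 * k - 1) * (1 - 1 / ((n : ℝ) + 1)) := by
    intro n
    induction n with
    | zero => simp
    | succ n ih =>
      rw [Finset.sum_range_succ]
      have hstep := term_bd k hk ((n:ℝ)+1) (by have : (0:ℝ) ≤ n := Nat.cast_nonneg n; linarith)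
      push_cast
      push_cast at ih hstep
      linarith
  rcases n with _ | n
  · simp; positivity
  · refine (key n).trans ?_
    have h1 : (0:ℝ) ≤ (1/2 : ℝ) ^ (2*k-1) := by positivity
    have h2 : (0:ℝ) < (n:ℝ) + 1 := by positivity
    have h3 : 0 < 1 / ((n:ℝ)+1) := by positivity
    nlinarith

private lemma u_bd : ∀ k : ℕ, 2 ≤ k →
    (6.283186 : ℝ) ^ (2 * k + 1) / (Nat.factorial (2 * k + 1) : ℝ) ≤ 81.61 := by
  intro k hk
  induction k with
  | zero => omega
  | succ n ih =>
    rcases Nat.lt_or_ge n 2 with h | h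
    · have hn : n = 1 := by omega
      subst hn
      norm_num [Nat.factorial]
    · have ihn := ih h
      have hn2 : (2:ℝ) ≤ (n:ℝ) := by exact_mod_cast h
      have e1 : 2 * (n+1) + 1 = (2*n+1) + 2 := by ring
      have e2 : (Nat.factorial ((2*n+1)+2) : ℝ) =
          ((2*n+1:ℕ)+2) * (((2*n+1:ℕ)+1) * (Nat.factorial (2*n+1) : ℝ)) := by
        rw [Nat.factorial_succ, Nat.factorial_succ]
        push_cast
        ring
      have hfpos : (0:ℝ) < (Nat.factorial (2*n+1) : ℝ) := by
        exact_mod_cast Nat.factorial_pos _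
      rw [e1, e2, pow_add]
      have key : (6.283186 : ℝ) ^ 2 ≤ (((2*n+1:ℕ):ℝ)+2) * (((2*n+1:ℕ):ℝ)+1) := by
        push_cast; nlinarith
      calc (6.283186 : ℝ) ^ (2*n+1) * 6.283186 ^ 2 /
            ((((2*n+1:ℕ):ℝ)+2) * ((((2*n+1:ℕ):ℝ)+1) * (Nat.factorial (2*n+1) : ℝ)))
          = ((6.283186 : ℝ) ^ (2*n+1) / (Nat.factorial (2*n+1) : ℝ)) *
            ((6.283186:ℝ) ^ 2 / ((((2*n+1:ℕ):ℝ)+2) * (((2*n+1:ℕ):ℝ)+1))) := by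
            rw [div_mul_div_comm]
            congr 1
            ring
        _ ≤ 81.61 * 1 := by
            apply mul_le_mul ihn ?_ (by positivity) (by norm_num)
            rw [div_le_one (by positivity)]
            exact key
        _ = 81.61 := mul_one _

private lemma exp_aux (K : ℕ) (hK : 1 ≤ K) : (((K:ℝ)+1)/K) ^ K ≤ Real.exp 1 := by
  have hK0 : (0:ℝ) < K := by exact_mod_cast hK
  have h1 : ((K:ℝ)+1)/K ≤ Real.exp (1/(K:ℝ)) := by
    have h2 := Real.add_one_le_exp (1/(K:ℝ))
    have h3 : ((K:ℝ)+1)/K = 1/(K:ℝ) + 1 := by field_simp; ring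
    linarith
  calc (((K:ℝ)+1)/K) ^ K ≤ (Real.exp (1/(K:ℝ))) ^ K :=
        pow_le_pow_left₀ (by positivity) h1 _
    _ = Real.exp 1 := by
        rw [← Real.exp_nat_mul]
        congr 1
        field_simp

private lemma V_step (K : ℕ) (hK : 5 ≤ K) :
    ((8.81:ℝ) * (K+1)) ^ (K+1) / (Nat.factorial (2*(K+1)+1) : ℝ) ≤
      ((8.81:ℝ) * K) ^ K / (Nat.factorial (2*K+1) : ℝ) := by
  have hK0 : (0:ℝ) < K := by
    have : (5:ℝ) ≤ (K:ℝ) := by exact_mod_cast hK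
    linarith
  have hK5 : (5:ℝ) ≤ (K:ℝ) := by exact_mod_cast hK
  set a : ℝ := 8.81 with ha
  have hbase : (a*((K:ℝ)+1))^(K+1) ≤ (a*(K:ℝ))^K * (a*((K:ℝ)+1) * Real.exp 1) := by
    have e1 : (a*((K:ℝ)+1)) = (a*(K:ℝ))*(((K:ℝ)+1)/K) := by field_simp
    have e2 : (a*((K:ℝ)+1))^(K+1) = (a*(K:ℝ))^K * ((((K:ℝ)+1)/K)^K * (a*((K:ℝ)+1))) := by
      rw [pow_succ]
      nth_rewrite 1 [e1]
      rw [mul_pow]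
      ring
    rw [e2]
    apply mul_le_mul_of_nonneg_left _ (by positivity)
    have h3 := exp_aux K (by omega)
    have h4 : (0:ℝ) ≤ a*((K:ℝ)+1) := by positivity
    nlinarith
  have e3 : (Nat.factorial (2*(K+1)+1) : ℝ) =
      ((2*(K:ℝ)+3) * (2*(K:ℝ)+2)) * (Nat.factorial (2*K+1) : ℝ) := by
    have e4 : 2*(K+1)+1 = ((2*K+1)+1)+1 := by ring
    rw [e4, Nat.factorial_succ, Nat.factorial_succ]
    push_cast
    ring
  have hF1 : (0:ℝ) < (Nat.factorial (2*K+1) : ℝ) := by exact_mod_cast Nat.factorial_pos _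
  have hc : a*((K:ℝ)+1) * Real.exp 1 ≤ (2*(K:ℝ)+3) * (2*(K:ℝ)+2) := by
    have he := Real.exp_one_lt_d9
    have he0 := Real.exp_pos 1
    rw [ha]
    nlinarith [mul_le_mul_of_nonneg_left he.le (show (0:ℝ) ≤ 8.81*((K:ℝ)+1) by positivity)]
  rw [div_le_div_iff₀ (by positivity) (by positivity), e3]
  calc (a*((K:ℝ)+1))^(K+1) * (Nat.factorial (2*K+1) : ℝ)
      ≤ ((a*(K:ℝ))^K * (a*((K:ℝ)+1) * Real.exp 1)) * (Nat.factorial (2*K+1) : ℝ) :=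
        mul_le_mul_of_nonneg_right hbase hF1.le
    _ ≤ ((a*(K:ℝ))^K * ((2*(K:ℝ)+3) * (2*(K:ℝ)+2))) * (Nat.factorial (2*K+1) : ℝ) := by
        have h5 : (0:ℝ) ≤ (a*(K:ℝ))^K := by positivity
        exact mul_le_mul_of_nonneg_right (mul_le_mul_of_nonneg_left hc h5) hF1.le
    _ = (a*(K:ℝ))^K * ((2*(K:ℝ)+3) * (2*(K:ℝ)+2) * (Nat.factorial (2*K+1) : ℝ)) := by ring

private lemma V_bd : ∀ k : ℕ, 1 ≤ k →
    ((8.81:ℝ) * k) ^ k / (Nat.factorial (2*k+1) : ℝ) ≤ 4.27 := by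
  have main : ∀ j : ℕ, ((8.81:ℝ) * ((j:ℝ)+5)) ^ (j+5) / (Nat.factorial (2*(j+5)+1) : ℝ) ≤ 4.27 := by
    intro j
    induction j with
    | zero => norm_num [Nat.factorial]
    | succ n ih =>
      have hstep := V_step (n+5) (by omega)
      push_cast at hstep ih ⊢
      ring_nf at hstep ih ⊢
      exact le_trans hstep ih
  intro k hk
  rcases Nat.lt_or_ge k 5 with h | h
  · interval_cases k
    · norm_num [Nat.factorial]
    · norm_num [Nat.factorial]
    · norm_num [Nat.factorial]
    · norm_num [Nat.factorial]
  · obtain ⟨j, rfl⟩ : ∃ j, k = j + 5 := ⟨k - 5, by omega⟩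
    have hmain := main j
    push_cast at hmain ⊢
    ring_nf at hmain ⊢
    exact hmain

set_option maxHeartbeats 1000000 in
theorem stmt8 (t : ℝ) (ht : Real.sqrt 15 ≤ t) (m k : ℕ) (hm : 1 ≤ m) (hk : 1 ≤ k)
    (B₀ B₁ B₂ B₃ B₄ : ℝ)
    (hB₀ : B₀ = 2 ^ (3 + 2 * k) * π ^ (2 + 2 * k) * (m : ℝ) ^ (1 + 2 * k) *
      (∑' n : ℕ, 1 / ((n : ℝ) + 1) ^ (1 + 2 * k)) / (Nat.factorial (1 + 2 * k)))
    (hB₁ : B₁ = 24 * π * Real.sqrt (2 * π) * (m : ℝ) ^ ((3 : ℝ) / 2 + (k : ℝ)) *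
      (1 + (k : ℝ) / (Real.sqrt 3 * π)) ^ k * Real.exp (4 * π * m / Real.sqrt 3))
    (hB₂ : B₂ = 2 ^ (4 + 2 * k) * π ^ (2 + 2 * k) * (m : ℝ) ^ (1 + 2 * k) *
      (∑' n : ℕ, 1 / ((n : ℝ) + 1) ^ (1 + 2 * k)) / (Nat.factorial (2 * k + 1)) *
      (2 * k / (Real.sqrt 3 * π)) ^ k * Real.exp (-(k : ℝ) / 2) *
      (Real.exp (-(Real.sqrt 3) * π / 2) / (1 - Real.exp (-(Real.sqrt 3) * π / 2))))
    (hB₃ : B₃ = ((m : ℝ) + (k : ℝ) / (Real.sqrt 3 * π)) ^ k * Real.exp (t * π * ((m : ℝ) - 1)))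
    (hB₄ : B₄ = ((m : ℝ) + (k : ℝ) / (Real.sqrt 3 * π)) ^ k * Real.exp (t * π * m / 2)) :
    (B₀ + B₁ + B₂ + B₃ + B₄) * Real.exp (-t * π * ((m : ℝ) - 1 / 2)) ≤
      615 * (m : ℝ) ^ (1 + 2 * k) * ((m : ℝ) + (k : ℝ) / (Real.sqrt 3 * π)) ^ k := by
  have hπl : (3.141592:ℝ) < π := Real.pi_gt_d6
  have hπu : π < 3.141593 := Real.pi_lt_d6
  have hπ0 : (0:ℝ) < π := Real.pi_pos
  have hs3l : (1.7320508:ℝ) ≤ Real.sqrt 3 := Real.le_sqrt_of_sq_le (by norm_num)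
  have hs3u : Real.sqrt 3 ≤ 1.7320509 := Real.sqrt_le_iff.mpr ⟨by norm_num, by norm_num⟩
  have hs3p : (0:ℝ) < Real.sqrt 3 := by linarith
  have hs15l : (3.8729833:ℝ) ≤ Real.sqrt 15 := Real.le_sqrt_of_sq_le (by norm_num)
  have ht0 : (0:ℝ) < t := by linarith
  have hm1 : (1:ℝ) ≤ (m:ℝ) := by exact_mod_cast hm
  have hk1 : (1:ℝ) ≤ (k:ℝ) := by exact_mod_cast hk
  set P : ℝ := (m:ℝ) ^ (1 + 2*k) with hPdef
  set Q : ℝ := ((m:ℝ) + (k:ℝ)/(Real.sqrt 3 * π)) ^ k with hQdef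
  have hP0 : (0:ℝ) ≤ P := by positivity
  have hP1 : (1:ℝ) ≤ P := by
    calc (1:ℝ) = 1 ^ (1+2*k) := (one_pow _).symm
      _ ≤ P := pow_le_pow_left₀ (by norm_num) hm1 _
  have hkq0 : (0:ℝ) ≤ (k:ℝ)/(Real.sqrt 3 * π) := by positivity
  have hQb : (1:ℝ) ≤ (m:ℝ) + (k:ℝ)/(Real.sqrt 3 * π) := by linarith
  have hQ1 : (1:ℝ) ≤ Q := by
    calc (1:ℝ) = 1 ^ k := (one_pow _).symm
      _ ≤ Q := pow_le_pow_left₀ (by norm_num) hQb _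
  have hQ0 : (0:ℝ) ≤ Q := by linarith
  have hm32 : (m:ℝ) ^ ((3:ℝ)/2 + (k:ℝ)) ≤ P := by
    have h22 : (m:ℝ) ^ ((3:ℝ)/2 + (k:ℝ)) ≤ (m:ℝ) ^ (((1+2*k : ℕ)):ℝ) :=
      Real.rpow_le_rpow_of_exponent_le hm1 (by push_cast; linarith)
    rwa [Real.rpow_natCast] at h22
  set E : ℝ := Real.exp (-t * π * ((m:ℝ) - 1/2)) with hEdef
  have hE0 : (0:ℝ) ≤ E := (Real.exp_pos _).le
  -- lower bound on the decay exponent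
  have htπ : (12.16733:ℝ) ≤ t * π := by
    have := mul_le_mul (le_trans hs15l ht) hπl.le (by norm_num) (by linarith)
    linarith only [this]
  have hX : (6.083433:ℝ) ≤ t * π * ((m:ℝ) - 1/2) := by
    have h2 : (1/2:ℝ) ≤ (m:ℝ) - 1/2 := by linarith
    have h3 : t*π*(1/2) ≤ t*π*((m:ℝ)-1/2) :=
      mul_le_mul_of_nonneg_left h2 (by positivity)
    linarith only [htπ, h3]
  have hexp435 : (435:ℝ) ≤ Real.exp (6.083433) := by
    have e2 : Real.exp (6:ℝ) = (Real.exp 1)^6 := by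
      rw [← Real.exp_nat_mul]; norm_num
    have e3 : (403.4287:ℝ) ≤ Real.exp 6 := by
      rw [e2]
      calc (403.4287:ℝ) ≤ 2.7182818283^6 := by norm_num
        _ ≤ (Real.exp 1)^6 := pow_le_pow_left₀ (by norm_num) Real.exp_one_gt_d9.le 6
    have e4 : (1.083433:ℝ) ≤ Real.exp 0.083433 := by
      have := Real.add_one_le_exp (0.083433:ℝ); linarith
    have e1 : Real.exp (6.083433:ℝ) = Real.exp 6 * Real.exp 0.083433 := by
      rw [← Real.exp_add]; norm_num
    rw [e1]
    have e4' := mul_le_mul e3 e4 (by norm_num) (Real.exp_pos 6).le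
    calc (435:ℝ) ≤ 403.4287*1.083433 := by norm_num
      _ ≤ Real.exp 6 * Real.exp 0.083433 := e4'
  have hEub : E ≤ 1/435 := by
    have e5 : -t * π * ((m:ℝ) - 1/2) = -(t * π * ((m:ℝ) - 1/2)) := by ring
    rw [hEdef, e5, Real.exp_neg]
    have h6 : (435:ℝ) ≤ Real.exp (t*π*((m:ℝ)-1/2)) :=
      le_trans hexp435 (Real.exp_le_exp.mpr hX)
    have h7 := inv_anti₀ (by norm_num : (0:ℝ) < 435) h6
    calc (Real.exp (t*π*((m:ℝ)-1/2)))⁻¹ ≤ (435:ℝ)⁻¹ := h7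
      _ = 1/435 := by norm_num
  -- zeta bound
  set Z : ℝ := ∑' n : ℕ, 1 / ((n : ℝ) + 1) ^ (1 + 2*k) with hZdef
  have hZ0 : (0:ℝ) ≤ Z := tsum_nonneg (fun n => by positivity)
  have hZub : Z ≤ 1 + (1/2:ℝ)^(2*k-1) := by
    rw [hZdef]; exact zeta_bd k hk
  have hfpos : (0:ℝ) < (Nat.factorial (2*k+1) : ℝ) := by
    exact_mod_cast Nat.factorial_pos _
  ----------------------------------------------------------------
  -- B₀ bound
  have hWZ : (2*π)^(2*k+1) / (Nat.factorial (2*k+1) : ℝ) * Z ≤ 91.92 := by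
    have hpow : (2*π)^(2*k+1) ≤ (6.283186:ℝ)^(2*k+1) :=
      pow_le_pow_left₀ (by positivity) (by linarith) _
    rcases Nat.lt_or_ge k 2 with h | h
    · have hk1' : k = 1 := by omega
      subst hk1'
      have hZ' : Z ≤ 3/2 := by
        refine hZub.trans ?_; norm_num
      calc (2*π)^(2*1+1)/(Nat.factorial (2*1+1):ℝ) * Z
          ≤ (6.283186:ℝ)^(2*1+1)/(Nat.factorial (2*1+1):ℝ) * (3/2) := by
            apply mul_le_mul _ hZ' hZ0 (by positivity)
            gcongr
        _ ≤ 91.92 := by norm_num [Nat.factorial]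
    · have hZ' : Z ≤ 1 + (1/2:ℝ)^3 := by
        refine hZub.trans ?_
        have h8 : (1/2:ℝ)^(2*k-1) ≤ (1/2:ℝ)^3 :=
          pow_le_pow_of_le_one (by norm_num) (by norm_num) (by omega)
        linarith
      have hu := u_bd k h
      calc (2*π)^(2*k+1)/(Nat.factorial (2*k+1):ℝ) * Z
          ≤ (6.283186:ℝ)^(2*k+1)/(Nat.factorial (2*k+1):ℝ) * (1 + (1/2:ℝ)^3) := by
            apply mul_le_mul _ hZ' hZ0 (by positivity)
            gcongr
        _ ≤ 81.61 * (1 + (1/2:ℝ)^3) :=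
            mul_le_mul_of_nonneg_right hu (by norm_num)
        _ ≤ 91.92 := by norm_num
  have hB₀P : B₀ ≤ 1155.2 * P := by
    have efac : Nat.factorial (1+2*k) = Nat.factorial (2*k+1) := by
      rw [Nat.add_comm]
    have e6 : B₀ = 4*π*P*((2*π)^(2*k+1)/(Nat.factorial (2*k+1):ℝ) * Z) := by
      rw [hB₀, efac]
      field_simp
      ring
    rw [e6]
    have h9 : 4*π*P*((2*π)^(2*k+1)/(Nat.factorial (2*k+1):ℝ) * Z) ≤ 4*π*P*91.92 :=
      mul_le_mul_of_nonneg_left hWZ (by positivity)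
    refine h9.trans ?_
    have h9b : (4*91.92)*(π*P) ≤ (4*91.92)*(3.141593*P) :=
      mul_le_mul_of_nonneg_left (mul_le_mul_of_nonneg_right hπu.le hP0) (by norm_num)
    calc 4*π*P*91.92 = (4*91.92)*(π*P) := by ring
      _ ≤ (4*91.92)*(3.141593*P) := h9b
      _ ≤ 1155.2*P := by linarith only [hP0]
  have h0 : B₀ * E ≤ 2.66 * P := by
    calc B₀ * E ≤ (1155.2*P) * (1/435) :=
        mul_le_mul hB₀P hEub hE0 (by positivity)
      _ ≤ 2.66 * P := by linarith only [hP0]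
  ----------------------------------------------------------------
  -- B₁ bound
  have hs2piu : Real.sqrt (2*π) ≤ 2.5066286 :=
    Real.sqrt_le_iff.mpr ⟨by norm_num, by nlinarith only [hπu]⟩
  have hc1 : 24*π*Real.sqrt (2*π) ≤ 188.996 := by
    have h10 : 24*π*Real.sqrt (2*π) ≤ 24*π*2.5066286 :=
      mul_le_mul_of_nonneg_left hs2piu (by positivity)
    nlinarith only [hπu, h10]
  have hδ : 4*π*(m:ℝ)/Real.sqrt 3 + (-t*π*((m:ℝ)-1/2)) ≤ 1.17166 := by
    have h43 : 4/Real.sqrt 3 ≤ 2.3094012 := by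
      rw [div_le_iff₀ hs3p]
      nlinarith only [hs3l]
    have hb : 4*(m:ℝ)/Real.sqrt 3 - Real.sqrt 15*((m:ℝ)-1/2) ≤ 0.3729096 := by
      have e7 : 4*(m:ℝ)/Real.sqrt 3 = (4/Real.sqrt 3)*(m:ℝ) := by ring
      have h11 : (4/Real.sqrt 3)*(m:ℝ) ≤ 2.3094012*(m:ℝ) :=
        mul_le_mul_of_nonneg_right h43 (by positivity)
      have h12 : (3.8729833:ℝ)*((m:ℝ)-1/2) ≤ Real.sqrt 15*((m:ℝ)-1/2) :=
        mul_le_mul_of_nonneg_right hs15l (by linarith)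
      rw [e7]
      linarith only [h11, h12, hm1]
    have h13 : Real.sqrt 15*π*((m:ℝ)-1/2) ≤ t*π*((m:ℝ)-1/2) :=
      mul_le_mul_of_nonneg_right (mul_le_mul_of_nonneg_right ht hπ0.le) (by linarith)
    have e8 : 4*π*(m:ℝ)/Real.sqrt 3 - Real.sqrt 15*π*((m:ℝ)-1/2)
        = π*(4*(m:ℝ)/Real.sqrt 3 - Real.sqrt 15*((m:ℝ)-1/2)) := by ring
    have h14 : π*(4*(m:ℝ)/Real.sqrt 3 - Real.sqrt 15*((m:ℝ)-1/2)) ≤ π*0.3729096 :=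
      mul_le_mul_of_nonneg_left hb hπ0.le
    have h15 : π*(0.3729096:ℝ) ≤ 3.141593*0.3729096 :=
      mul_le_mul_of_nonneg_right hπu.le (by norm_num)
    have h16 : (3.141593:ℝ)*0.3729096 ≤ 1.17166 := by norm_num
    linarith
  have hexpδ : Real.exp (4*π*(m:ℝ)/Real.sqrt 3 + (-t*π*((m:ℝ)-1/2))) ≤ 3.2281 := by
    have h17 : Real.exp (4*π*(m:ℝ)/Real.sqrt 3 + (-t*π*((m:ℝ)-1/2)))
        ≤ Real.exp 1.17166 := Real.exp_le_exp.mpr hδ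
    have h18 : Real.exp (1.17166:ℝ) = Real.exp 1 * Real.exp 0.17166 := by
      rw [← Real.exp_add]; norm_num
    have h19 := Real.exp_bound' (show (0:ℝ) ≤ 0.17166 by norm_num)
      (show (0.17166:ℝ) ≤ 1 by norm_num) (show 0 < 3 by norm_num)
    have h20 : Real.exp (0.17166:ℝ) ≤ 1.18752 := by
      refine h19.trans ?_
      norm_num [Finset.sum_range_succ, Nat.factorial]
    have h21 : Real.exp 1 * Real.exp (0.17166:ℝ) ≤ 2.7182818286 * 1.18752 := by
      apply mul_le_mul Real.exp_one_lt_d9.le h20 (Real.exp_pos _).le (by norm_num)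
    rw [h18] at h17
    refine h17.trans (h21.trans ?_)
    norm_num
  have hQ'Q : (1 + (k:ℝ)/(Real.sqrt 3*π))^k ≤ Q :=
    pow_le_pow_left₀ (by positivity) (by linarith) k
  have h1 : B₁ * E ≤ 610.9 * (P*Q) := by
    rw [hB₁, hEdef]
    have e9 : 24*π*Real.sqrt (2*π)*(m:ℝ)^((3:ℝ)/2+(k:ℝ))*(1+(k:ℝ)/(Real.sqrt 3*π))^k
        * Real.exp (4*π*(m:ℝ)/Real.sqrt 3) * Real.exp (-t*π*((m:ℝ)-1/2))
        = (24*π*Real.sqrt (2*π))*((m:ℝ)^((3:ℝ)/2+(k:ℝ)))*((1+(k:ℝ)/(Real.sqrt 3*π))^k)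
          *(Real.exp (4*π*(m:ℝ)/Real.sqrt 3 + (-t*π*((m:ℝ)-1/2)))) := by
      rw [Real.exp_add]; ring
    rw [e9]
    have h23 : (24*π*Real.sqrt (2*π))*((m:ℝ)^((3:ℝ)/2+(k:ℝ)))*((1+(k:ℝ)/(Real.sqrt 3*π))^k)
          *(Real.exp (4*π*(m:ℝ)/Real.sqrt 3 + (-t*π*((m:ℝ)-1/2))))
        ≤ (188.996*P*Q)*3.2281 := by
      apply mul_le_mul _ hexpδ (Real.exp_pos _).le (by positivity)
      apply mul_le_mul _ hQ'Q (by positivity) (by positivity)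
      apply mul_le_mul hc1 hm32 (by positivity) (by norm_num)
    refine h23.trans ?_
    nlinarith only [mul_nonneg hP0 hQ0]
  ----------------------------------------------------------------
  -- B₂ bound
  set R : ℝ := Real.exp (-(Real.sqrt 3) * π / 2) / (1 - Real.exp (-(Real.sqrt 3) * π / 2))
    with hRdef
  have hxY : Real.exp (-(Real.sqrt 3) * π / 2) ≤ 1/15.17 := by
    have hy : (2.720698:ℝ) ≤ Real.sqrt 3 * π / 2 := by
      nlinarith only [mul_le_mul hs3l hπl.le (by norm_num : (0:ℝ) ≤ 3.141592) (by positivity)]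
    have h24 : (15.17:ℝ) ≤ Real.exp 2.720698 := by
      have e10 : Real.exp (2.720698:ℝ) = Real.exp 2 * Real.exp 0.720698 := by
        rw [← Real.exp_add]; norm_num
      have h25 : (7.389056:ℝ) ≤ Real.exp 2 := by
        have e11 : Real.exp (2:ℝ) = (Real.exp 1)^2 := by
          rw [← Real.exp_nat_mul]; norm_num
        rw [e11]; nlinarith only [Real.exp_one_gt_d9, Real.exp_pos 1]
      have h26 : (2.0533:ℝ) ≤ Real.exp 0.720698 := by
        have h27 := Real.sum_le_exp_of_nonneg (show (0:ℝ) ≤ 0.720698 by norm_num) 5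
        have h28 : (2.0533:ℝ) ≤ ∑ i ∈ Finset.range 5, (0.720698:ℝ)^i/(Nat.factorial i) := by
          norm_num [Finset.sum_range_succ, Nat.factorial]
        exact le_trans h28 h27
      rw [e10]; nlinarith only [h25, h26, Real.exp_pos (0.720698:ℝ)]
    have h29 : (15.17:ℝ) ≤ Real.exp (Real.sqrt 3 * π / 2) :=
      h24.trans (Real.exp_le_exp.mpr hy)
    have e12 : -(Real.sqrt 3) * π / 2 = -(Real.sqrt 3 * π / 2) := by ring
    rw [e12, Real.exp_neg]
    have h30 := inv_anti₀ (by norm_num : (0:ℝ) < 15.17) h29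
    calc (Real.exp (Real.sqrt 3 * π/2))⁻¹ ≤ (15.17:ℝ)⁻¹ := h30
      _ ≤ 1/15.17 := by norm_num
  have hR0 : (0:ℝ) ≤ R := by
    rw [hRdef]
    apply div_nonneg (Real.exp_pos _).le
    linarith [hxY]
  have hRub : R ≤ 0.0707 := by
    rw [hRdef]
    have hden : (1:ℝ) - 1/15.17 ≤ 1 - Real.exp (-(Real.sqrt 3) * π / 2) := by linarith
    calc Real.exp (-(Real.sqrt 3) * π / 2) / (1 - Real.exp (-(Real.sqrt 3) * π / 2))
        ≤ (1/15.17)/(1-1/15.17) := by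
          apply div_le_div₀ (by norm_num) hxY (by norm_num) hden
      _ ≤ 0.0707 := by norm_num
  have heak : Real.exp (-(k:ℝ)/2) = (Real.exp (-(1:ℝ)/2))^k := by
    rw [← Real.exp_nat_mul]; congr 1; ring
  have hahalf : Real.exp (-(1:ℝ)/2) ≤ 0.6065307 := by
    have h31 : (Real.exp ((1:ℝ)/2))^2 = Real.exp 1 := by
      rw [← Real.exp_nat_mul]; norm_num
    have h32 : (1.64872126:ℝ) ≤ Real.exp ((1:ℝ)/2) := by
      nlinarith only [h31, Real.exp_pos ((1:ℝ)/2), Real.exp_one_gt_d9]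
    have e13 : Real.exp (-(1:ℝ)/2) = (Real.exp ((1:ℝ)/2))⁻¹ := by
      rw [← Real.exp_neg]; norm_num
    rw [e13]
    have h33 := inv_anti₀ (by norm_num : (0:ℝ) < 1.64872126) h32
    calc (Real.exp ((1:ℝ)/2))⁻¹ ≤ (1.64872126:ℝ)⁻¹ := h33
      _ ≤ 0.6065307 := by norm_num
  have haA : 8*π*Real.exp (-(1:ℝ)/2)/Real.sqrt 3 ≤ 8.81 := by
    rw [div_le_iff₀ hs3p]
    nlinarith only [hs3l,
      mul_le_mul hπu.le hahalf (Real.exp_pos _).le (by norm_num : (0:ℝ) ≤ 3.141593)]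
  have hV : ((8*π*Real.exp (-(1:ℝ)/2)/Real.sqrt 3)*(k:ℝ))^k/(Nat.factorial (2*k+1):ℝ)
      ≤ 4.27 := by
    refine le_trans ?_ (V_bd k hk)
    have hnum : ((8*π*Real.exp (-(1:ℝ)/2)/Real.sqrt 3)*(k:ℝ))^k ≤ ((8.81:ℝ)*(k:ℝ))^k :=
      pow_le_pow_left₀ (by positivity) (mul_le_mul_of_nonneg_right haA (by positivity)) k
    exact (div_le_div_iff_of_pos_right hfpos).mpr hnum
  have hB₂P : B₂ ≤ 71.6 * P := by
    rw [hB₂]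
    have e14 : (2:ℝ)^(4+2*k)*π^(2+2*k)*P*Z/(Nat.factorial (2*k+1):ℝ)
          *(2*(k:ℝ)/(Real.sqrt 3*π))^k*Real.exp (-(k:ℝ)/2)*R
        = 16*π^2*P*Z*R*(((8*π*Real.exp (-(1:ℝ)/2)/Real.sqrt 3)*(k:ℝ))^k
            /(Nat.factorial (2*k+1):ℝ)) := by
      rw [heak]
      field_simp [hs3p.ne', hπ0.ne', hfpos.ne']
      ring_nf
      rw [show ((8:ℝ))^k = (2:ℝ)^(k*3) from by rw [pow_mul']; norm_num]
      have hπk : π ^ (k*2) * π⁻¹ ^ k = π ^ k := by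
        rw [inv_pow, pow_mul, sq, mul_inv_cancel_right₀ (pow_ne_zero _ hπ0.ne')]
      linear_combination (π ^ 2 * Z * (k:ℝ) ^ k * (Real.sqrt 3)⁻¹ ^ k * Real.exp (-1 / 2) ^ k * R * 2 ^ (k * 3) * 16) * hπk
    rw [e14]
    have h34 : 16*π^2*P*Z*R*(((8*π*Real.exp (-(1:ℝ)/2)/Real.sqrt 3)*(k:ℝ))^k
            /(Nat.factorial (2*k+1):ℝ))
        ≤ (((16*3.141593^2*P)*(3/2))*0.0707)*4.27 := by
      have hZ32 : Z ≤ 3/2 := by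
        refine hZub.trans ?_
        have h35 : (1/2:ℝ)^(2*k-1) ≤ (1/2:ℝ)^1 :=
          pow_le_pow_of_le_one (by norm_num) (by norm_num) (by omega)
        norm_num at h35 ⊢; linarith
      have hππ : π^2 ≤ 3.141593^2 := by nlinarith only [hπu, hπ0]
      have hpi2 : 16*π^2*P ≤ 16*3.141593^2*P := by
        nlinarith only [mul_le_mul_of_nonneg_right hππ hP0]
      apply mul_le_mul _ hV (by positivity) (by positivity)
      apply mul_le_mul _ hRub hR0 (by positivity)
      apply mul_le_mul _ hZ32 hZ0 (by positivity)
      exact hpi2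
    refine h34.trans ?_
    linarith only [hP0]
  have h2 : B₂ * E ≤ 0.25 * P := by
    calc B₂ * E ≤ (71.6*P) * (1/435) :=
        mul_le_mul hB₂P hEub hE0 (by positivity)
      _ ≤ 0.25 * P := by linarith only [hP0]
  ----------------------------------------------------------------
  -- B₃ and B₄
  have h3 : B₃ * E ≤ 0.01 * Q := by
    rw [hB₃, hEdef, mul_assoc, ← Real.exp_add]
    have e15 : t*π*((m:ℝ)-1) + (-t*π*((m:ℝ)-1/2)) = -(t*π/2) := by ring
    rw [e15]
    have h36 : Real.exp (-(t*π/2)) ≤ 0.01 := by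
      rw [Real.exp_neg]
      have h37 : (6.083433:ℝ) ≤ t*π/2 := by linarith
      have h38 : (435:ℝ) ≤ Real.exp (t*π/2) :=
        le_trans hexp435 (Real.exp_le_exp.mpr h37)
      have h39 := inv_anti₀ (by norm_num : (0:ℝ) < 435) h38
      calc (Real.exp (t*π/2))⁻¹ ≤ (435:ℝ)⁻¹ := h39
        _ ≤ 0.01 := by norm_num
    calc Q * Real.exp (-(t*π/2)) ≤ Q * 0.01 :=
        mul_le_mul_of_nonneg_left h36 hQ0
      _ = 0.01 * Q := by ring
  have h4 : B₄ * E ≤ Q := by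
    rw [hB₄, hEdef, mul_assoc, ← Real.exp_add]
    have h40 : t*π*(m:ℝ)/2 + (-t*π*((m:ℝ)-1/2)) ≤ 0 := by
      have h41 : (0:ℝ) ≤ t*π*((m:ℝ)-1) :=
        mul_nonneg (by positivity) (by linarith)
      nlinarith only [h41]
    calc Q * Real.exp (t*π*(m:ℝ)/2 + (-t*π*((m:ℝ)-1/2)))
        ≤ Q * 1 := mul_le_mul_of_nonneg_left (Real.exp_le_one_iff.mpr h40) hQ0
      _ = Q := mul_one _
  ----------------------------------------------------------------
  have hPQ : P ≤ P*Q := by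
    nlinarith only [mul_nonneg (sub_nonneg.mpr hQ1) hP0]
  have hQP : Q ≤ P*Q := by
    nlinarith only [mul_nonneg (sub_nonneg.mpr hP1) hQ0]
  have e16 : (B₀+B₁+B₂+B₃+B₄)*E = B₀*E+B₁*E+B₂*E+B₃*E+B₄*E := by ring
  rw [e16]
  nlinarith only [h0, h1, h2, h3, h4, hPQ, hQP, mul_nonneg hP0 hQ0]
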